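/- In Euclidean m-space with two agents, let f be a deterministic, unanimous, translation-invariant, strategyproof mechanism, and assume the established facts: (i) f is scalable in the sense that any dilation about a point can be realized (f(kA + t, kB + t) = k f(A,B) + t for k > 0, t ∈ ℝ^m), and (ii) for all A, B the output lies on the sphere with AB as diameter. If additionally f is rotation-invariant (conjugating the input profile by any rotation of ℝ^m conjugates the output by the same rotation), then f is dictatorial: either f(A,B) = A for all A, B, or f(A,B) = B for all A, B. -/

import Mathlib

open scoped RealInnerProductSpace Matrix

noncomputable def reflL (m : ℕ) (v : EuclideanSpace ℝ (Fin m)) :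
    EuclideanSpace ℝ (Fin m) →ₗ[ℝ] EuclideanSpace ℝ (Fin m) where
  toFun x := x - ((2 / ‖v‖ ^ 2) * ⟪v, x⟫) • v
  map_add' x y := by
    simp only [inner_add_right, mul_add, add_smul]
    abel
  map_smul' c x := by
    simp only [real_inner_smul_right, RingHom.id_apply, smul_sub, smul_smul]
    ring_nf

lemma reflL_apply (m : ℕ) (v x : EuclideanSpace ℝ (Fin m)) :
    reflL m v x = x - ((2 / ‖v‖ ^ 2) * ⟪v, x⟫) • v := rfl

lemma reflL_invol (m : ℕ) (v : EuclideanSpace ℝ (Fin m)) (hv : v ≠ 0) :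
    Function.Involutive (reflL m v) := by
  intro x
  have hn : ‖v‖ ^ 2 ≠ 0 := pow_ne_zero _ (norm_ne_zero_iff.mpr hv)
  have h1 : ⟪v, reflL m v x⟫ = -⟪v, x⟫ := by
    rw [reflL_apply, inner_sub_right, real_inner_smul_right, real_inner_self_eq_norm_sq]
    field_simp
    ring
  rw [reflL_apply (x := reflL m v x), h1, reflL_apply]
  simp only [mul_neg, neg_smul, sub_neg_eq_add, sub_add_cancel]

lemma reflL_norm (m : ℕ) (v : EuclideanSpace ℝ (Fin m)) (hv : v ≠ 0)
    (x : EuclideanSpace ℝ (Fin m)) : ‖reflL m v x‖ = ‖x‖ := by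
  have hn : ‖v‖ ^ 2 ≠ 0 := pow_ne_zero _ (norm_ne_zero_iff.mpr hv)
  have h : ‖reflL m v x‖ ^ 2 = ‖x‖ ^ 2 := by
    rw [reflL_apply, norm_sub_sq_real, norm_smul, real_inner_smul_right,
      real_inner_comm x v]
    rw [mul_pow, Real.norm_eq_abs, sq_abs]
    field_simp
    ring
  have := congrArg Real.sqrt h
  rwa [Real.sqrt_sq (norm_nonneg _), Real.sqrt_sq (norm_nonneg _)] at this

noncomputable def myRefl (m : ℕ) (v : EuclideanSpace ℝ (Fin m)) (hv : v ≠ 0) :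
    EuclideanSpace ℝ (Fin m) ≃ₗᵢ[ℝ] EuclideanSpace ℝ (Fin m) where
  toLinearEquiv := LinearEquiv.ofInvolutive (reflL m v) (reflL_invol m v hv)
  norm_map' := reflL_norm m v hv

lemma refl_apply (m : ℕ) (v : EuclideanSpace ℝ (Fin m)) (hv : v ≠ 0)
    (x : EuclideanSpace ℝ (Fin m)) :
    myRefl m v hv x = x - ((2 / ‖v‖ ^ 2) * ⟪v, x⟫) • v := rfl

lemma refl_det (m : ℕ) (v : EuclideanSpace ℝ (Fin m)) (hv : v ≠ 0) :
    LinearMap.det ((myRefl m v hv).toLinearEquiv :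
      EuclideanSpace ℝ (Fin m) →ₗ[ℝ] EuclideanSpace ℝ (Fin m)) = -1 := by
  have hn : ‖v‖ ^ 2 ≠ 0 := pow_ne_zero _ (norm_ne_zero_iff.mpr hv)
  have hcoe : ((myRefl m v hv).toLinearEquiv :
      EuclideanSpace ℝ (Fin m) →ₗ[ℝ] EuclideanSpace ℝ (Fin m)) = reflL m v := rfl
  rw [hcoe]
  classical
  let b := (EuclideanSpace.basisFun (Fin m) ℝ).toBasis
  rw [← LinearMap.det_toMatrix b]
  have hM : LinearMap.toMatrix b b (reflL m v)
      = (1 + Matrix.replicateCol (Fin 1) (fun i => (-2 / ‖v‖ ^ 2) * v i) * Matrix.replicateRow (Fin 1) v.ofLp :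
        Matrix (Fin m) (Fin m) ℝ) := by
    ext i j
    rw [LinearMap.toMatrix_apply]
    simp only [b, EuclideanSpace.basisFun_toBasis, PiLp.basisFun_apply, PiLp.basisFun_repr]
    have h1 : (reflL m v) (PiLp.single 2 j 1)
        = EuclideanSpace.single j 1
          - ((2 / ‖v‖ ^ 2) * ⟪v, EuclideanSpace.single j (1:ℝ)⟫) • v := rfl
    rw [h1, EuclideanSpace.inner_single_right]
    simp only [Matrix.add_apply, Matrix.one_apply, Matrix.mul_apply, Matrix.replicateCol_apply,
      Matrix.replicateRow_apply, Finset.univ_unique, Finset.sum_singleton]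
    simp only [PiLp.sub_apply, PiLp.smul_apply, smul_eq_mul, EuclideanSpace.single_apply,
      conj_trivial]
    by_cases h : i = j <;> simp [h] <;> ring
  rw [hM]; erw [Matrix.det_one_add_replicateCol_mul_replicateRow]
  have : v ⬝ᵥ (fun i => (-2 / ‖v‖ ^ 2) * v i) = -2 := by
    have hvn : ⟪v, v⟫ = ‖v‖ ^ 2 := real_inner_self_eq_norm_sq v
    rw [PiLp.inner_apply] at hvn
    simp only [RCLike.inner_apply, conj_trivial] at hvn
    simp only [dotProduct]
    have : ∑ i, v i * ((-2 / ‖v‖ ^ 2) * v i) = (-2 / ‖v‖ ^ 2) * ∑ i, v i * v i := by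
      rw [Finset.mul_sum]; congr 1; ext i; ring
    rw [this, hvn]
    field_simp
  rw [this]
  norm_num

lemma sq_eq_sq_nonneg {a b : ℝ} (ha : 0 ≤ a) (hb : 0 ≤ b) (h : a ^ 2 = b ^ 2) : a = b := by
  have := congrArg Real.sqrt h
  rwa [Real.sqrt_sq ha, Real.sqrt_sq hb] at this

lemma exists_orth (m : ℕ) (hm : 2 ≤ m) (w : EuclideanSpace ℝ (Fin m)) (hw : w ≠ 0) :
    ∃ n : EuclideanSpace ℝ (Fin m), n ≠ 0 ∧ ⟪n, w⟫ = 0 := by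
  have hj : ∃ j, w j ≠ 0 := by
    by_contra h
    push_neg at h
    exact hw (by ext j; exact h j)
  obtain ⟨j, hj⟩ := hj
  haveI : Nontrivial (Fin m) := Fin.nontrivial_iff_two_le.mpr hm
  obtain ⟨k, hk⟩ := exists_ne j
  refine ⟨EuclideanSpace.single k (w j) - EuclideanSpace.single j (w k), ?_, ?_⟩
  · intro h
    apply hj
    have h2 : (EuclideanSpace.single k (w j) - EuclideanSpace.single j (w k) :
        EuclideanSpace ℝ (Fin m)) k = 0 := by rw [h]; rfl
    rw [PiLp.sub_apply, EuclideanSpace.single_apply, EuclideanSpace.single_apply] at h2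
    simpa [hk] using h2
  · rw [inner_sub_left, EuclideanSpace.inner_single_left, EuclideanSpace.inner_single_left]
    simp only [conj_trivial]
    ring

lemma det_trans {m : ℕ} (R S : EuclideanSpace ℝ (Fin m) ≃ₗᵢ[ℝ] EuclideanSpace ℝ (Fin m)) :
    LinearMap.det (((R.trans S).toLinearEquiv :
        EuclideanSpace ℝ (Fin m) →ₗ[ℝ] EuclideanSpace ℝ (Fin m)))
      = LinearMap.det ((S.toLinearEquiv : EuclideanSpace ℝ (Fin m) →ₗ[ℝ] EuclideanSpace ℝ (Fin m)))
        * LinearMap.det ((R.toLinearEquiv :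
            EuclideanSpace ℝ (Fin m) →ₗ[ℝ] EuclideanSpace ℝ (Fin m))) := by
  rw [← LinearMap.det_comp]
  rfl

lemma refl_swap (m : ℕ) (u w : EuclideanSpace ℝ (Fin m)) (hu : ‖u‖ = 1) (hw : ‖w‖ = 1)
    (hd : u - w ≠ 0) : myRefl m (u - w) hd u = w := by
  have h3 : ‖u - w‖ ^ 2 ≠ 0 := pow_ne_zero _ (norm_ne_zero_iff.mpr hd)
  have h1 : ⟪u - w, u⟫ = 1 - ⟪u, w⟫ := by
    rw [inner_sub_left, real_inner_self_eq_norm_sq, hu, real_inner_comm w u]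
    ring
  have h2 : ‖u - w‖ ^ 2 = 2 - 2 * ⟪u, w⟫ := by
    rw [norm_sub_sq_real, hu, hw]; ring
  have hco : (2 / ‖u - w‖ ^ 2) * ⟪u - w, u⟫ = 1 := by
    rw [h1, h2]
    rw [h2] at h3
    rw [div_mul_eq_mul_div, div_eq_one_iff_eq h3]
    ring
  rw [refl_apply, hco, one_smul]
  abel

lemma exists_rot (m : ℕ) (hm : 2 ≤ m) (u w : EuclideanSpace ℝ (Fin m))
    (hu : ‖u‖ = 1) (hw : ‖w‖ = 1) :
    ∃ R : EuclideanSpace ℝ (Fin m) ≃ₗᵢ[ℝ] EuclideanSpace ℝ (Fin m),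
      LinearMap.det ((R.toLinearEquiv :
        EuclideanSpace ℝ (Fin m) →ₗ[ℝ] EuclideanSpace ℝ (Fin m))) = 1 ∧ R u = w := by
  have hw0 : w ≠ 0 := fun h => by simp [h] at hw
  obtain ⟨n, hn0, hnw⟩ := exists_orth m hm w hw0
  have hfix : (myRefl m n hn0) w = w := by
    rw [refl_apply, hnw]
    simp
  by_cases huw : u = w
  · refine ⟨(myRefl m n hn0).trans (myRefl m n hn0), ?_, ?_⟩
    · rw [det_trans, refl_det]; ring
    · rw [LinearIsometryEquiv.trans_apply, huw, hfix, hfix]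
  · have hd : u - w ≠ 0 := sub_ne_zero.mpr huw
    refine ⟨(myRefl m (u - w) hd).trans (myRefl m n hn0), ?_, ?_⟩
    · rw [det_trans, refl_det, refl_det]; ring
    · rw [LinearIsometryEquiv.trans_apply, refl_swap m u w hu hw hd, hfix]

set_option maxHeartbeats 2000000 in
/-- A deterministic, unanimous, translation-invariant, strategyproof
two-agent mechanism in Euclidean m-space that is scalable (about any point), whose
output lies on the sphere with the agents' segment as diameter, and which is
rotation-invariant, must be dictatorial. -/
theorem stmt9 {m : ℕ} (hm : 2 ≤ m)
    (f : EuclideanSpace ℝ (Fin m) → EuclideanSpace ℝ (Fin m) → EuclideanSpace ℝ (Fin m))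
    (hsp1 : ∀ A A' B, ‖f A B - A‖ ≤ ‖f A' B - A‖)
    (hsp2 : ∀ A B B', ‖f A B - B‖ ≤ ‖f A B' - B‖)
    (huna : ∀ C, f C C = C)
    (htrans : ∀ A B t, f (A + t) (B + t) = f A B + t)
    (hscale : ∀ (k : ℝ), 0 < k → ∀ (t A B : EuclideanSpace ℝ (Fin m)),
      f (k • A + t) (k • B + t) = k • f A B + t)
    (hsphere : ∀ A B, (inner ℝ (A - f A B) (B - f A B) : ℝ) = 0)
    (hrot : ∀ (R : EuclideanSpace ℝ (Fin m) ≃ₗᵢ[ℝ] EuclideanSpace ℝ (Fin m)),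
      LinearMap.det (R.toLinearEquiv : EuclideanSpace ℝ (Fin m) →ₗ[ℝ] EuclideanSpace ℝ (Fin m)) = 1 →
      ∀ (c A B : EuclideanSpace ℝ (Fin m)),
        f (R (A - c) + c) (R (B - c) + c) = R (f A B - c) + c) :
    (∀ A B, f A B = A) ∨ (∀ A B, f A B = B) := by
  have h2m : 0 < m := by omega
  obtain ⟨e1, he1def⟩ : ∃ x : EuclideanSpace ℝ (Fin m), x = EuclideanSpace.single ⟨0, h2m⟩ 1 := ⟨_, rfl⟩
  have hne : ‖e1‖ = 1 := by rw [he1def, EuclideanSpace.norm_single]; exact norm_one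
  obtain ⟨p, hpdef⟩ : ∃ x : EuclideanSpace ℝ (Fin m), x = f 0 e1 := ⟨_, rfl⟩
  -- transport lemma
  have key : ∀ (v : EuclideanSpace ℝ (Fin m)), v ≠ 0 →
      ∀ (R : EuclideanSpace ℝ (Fin m) ≃ₗᵢ[ℝ] EuclideanSpace ℝ (Fin m)),
      LinearMap.det (R.toLinearEquiv :
        EuclideanSpace ℝ (Fin m) →ₗ[ℝ] EuclideanSpace ℝ (Fin m)) = 1 →
      R e1 = ‖v‖⁻¹ • v → f 0 v = ‖v‖ • R p := by
    intro v hv R hdet hRe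
    have hnv : (0:ℝ) < ‖v‖ := norm_pos_iff.mpr hv
    have h1 : f 0 (R e1) = R p := by
      have := hrot R hdet 0 0 e1
      rw [hpdef]
      simpa using this
    have h3 : ‖v‖ • R e1 = v := by
      rw [hRe, smul_smul, mul_inv_cancel₀ hnv.ne', one_smul]
    calc f 0 v = f (‖v‖ • 0 + 0) (‖v‖ • R e1 + 0) := by rw [h3]; simp
      _ = ‖v‖ • f 0 (R e1) + 0 := hscale ‖v‖ hnv 0 0 (R e1)
      _ = ‖v‖ • R p := by rw [h1, add_zero]
  -- reduction to f 0 v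
  have red : ∀ A B : EuclideanSpace ℝ (Fin m), f A B = f 0 (B - A) + A := by
    intro A B
    have := htrans 0 (B - A) A
    simpa using this
  by_cases hp0 : p = 0
  · left
    intro A B
    rcases eq_or_ne B A with h | h
    · rw [h, huna]
    · have hv : B - A ≠ 0 := sub_ne_zero.mpr h
      have hnv : (0:ℝ) < ‖B - A‖ := norm_pos_iff.mpr hv
      have hw : ‖‖B - A‖⁻¹ • (B - A)‖ = 1 := by
        rw [norm_smul, norm_inv, norm_norm, inv_mul_cancel₀ hnv.ne']
      obtain ⟨R, hdet, hRe⟩ := exists_rot m hm e1 (‖B - A‖⁻¹ • (B - A)) hne hw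
      have := key (B - A) hv R hdet hRe
      rw [red A B, this, hp0]
      simp
  · by_cases hp1 : p = e1
    · right
      intro A B
      rcases eq_or_ne B A with h | h
      · rw [h, huna]
      · have hv : B - A ≠ 0 := sub_ne_zero.mpr h
        have hnv : (0:ℝ) < ‖B - A‖ := norm_pos_iff.mpr hv
        have hw : ‖‖B - A‖⁻¹ • (B - A)‖ = 1 := by
          rw [norm_smul, norm_inv, norm_norm, inv_mul_cancel₀ hnv.ne']
        obtain ⟨R, hdet, hRe⟩ := exists_rot m hm e1 (‖B - A‖⁻¹ • (B - A)) hne hw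
        have hk := key (B - A) hv R hdet hRe
        rw [red A B, hk, hp1, hRe, smul_smul, mul_inv_cancel₀ hnv.ne', one_smul]
        abel
    · exfalso
      obtain ⟨a, hadef⟩ : ∃ x : ℝ, x = ⟪e1, p⟫ := ⟨_, rfl⟩
      have hap : ⟪p, e1⟫ = a := by rw [hadef, real_inner_comm]
      have ha : ‖p‖ ^ 2 = a := by
        have h := hsphere 0 e1
        rw [← hpdef, zero_sub, inner_neg_left, inner_sub_right,
          real_inner_self_eq_norm_sq, hap] at h
        linarith
      obtain ⟨q, hqdef⟩ : ∃ x : EuclideanSpace ℝ (Fin m), x = p - a • e1 := ⟨_, rfl⟩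
      have hpq : p = q + a • e1 := by rw [hqdef]; abel
      have hqe1 : ⟪e1, q⟫ = 0 := by
        rw [hqdef, inner_sub_right, real_inner_smul_right,
          real_inner_self_eq_norm_sq, hne]
        simp [hadef]
      have he1q : ⟪q, e1⟫ = 0 := by rw [real_inner_comm]; exact hqe1
      have hqp : ⟪q, p⟫ = ‖q‖ ^ 2 := by
        have h1 : p - q = a • e1 := by rw [hqdef]; abel
        have h2 : ⟪q, p - q⟫ = 0 := by
          rw [h1, real_inner_smul_right, he1q]; ring
        rw [inner_sub_right, real_inner_self_eq_norm_sq] at h2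
        linarith
      have hq2 : ‖q‖ ^ 2 = a - a ^ 2 := by
        rw [hqdef, norm_sub_sq_real, real_inner_smul_right, hap, norm_smul, ha, hne,
          Real.norm_eq_abs, mul_pow, sq_abs]
        ring
      have ha0 : 0 < a := by
        rw [← ha]
        exact pow_pos (norm_pos_iff.mpr hp0) 2
      have hq0 : q ≠ 0 := by
        intro h
        have h0 : (0:ℝ) = a - a ^ 2 := by
          rw [← hq2, h, norm_zero]; ring
        have ha1 : a = 1 := by nlinarith
        apply hp1
        rw [hpq, h, ha1, one_smul, zero_add]
      have hqpos : 0 < ‖q‖ ^ 2 := pow_pos (norm_pos_iff.mpr hq0) 2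
      have ha1 : a < 1 := by nlinarith
      obtain ⟨s, hsdef⟩ : ∃ x : ℝ, x = Real.sqrt (1 - a) := ⟨_, rfl⟩
      have hs2 : s ^ 2 = 1 - a := by rw [hsdef]; exact Real.sq_sqrt (by linarith)
      have hs0 : 0 < s := by rw [hsdef]; exact Real.sqrt_pos.mpr (by linarith)
      have hs1 : s < 1 := by
        rw [hsdef]
        calc Real.sqrt (1 - a) < Real.sqrt 1 := Real.sqrt_lt_sqrt (by linarith) (by linarith)
          _ = 1 := Real.sqrt_one
      obtain ⟨w, hwdef⟩ : ∃ x : EuclideanSpace ℝ (Fin m), x = s • e1 + s⁻¹ • q := ⟨_, rfl⟩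
      have he1w : ⟪e1, w⟫ = s := by
        rw [hwdef, inner_add_right, real_inner_smul_right, real_inner_smul_right,
          real_inner_self_eq_norm_sq, hne, hqe1]
        ring
      have hw2 : ‖w‖ ^ 2 = 1 := by
        rw [hwdef, norm_add_sq_real, real_inner_smul_left, real_inner_smul_right, hqe1,
          norm_smul, norm_smul, hne, Real.norm_eq_abs, Real.norm_eq_abs, mul_pow, mul_pow,
          sq_abs, sq_abs, hq2]
        have hsne : s ≠ 0 := ne_of_gt hs0
        field_simp
        linear_combination (s ^ 2 - a) * hs2
      have hwn : ‖w‖ = 1 := by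
        refine sq_eq_sq_nonneg (norm_nonneg _) zero_le_one ?_
        rw [hw2]; ring
      obtain ⟨v, hvdef⟩ : ∃ x : EuclideanSpace ℝ (Fin m), x = e1 + (1 - a)⁻¹ • q := ⟨_, rfl⟩
      have hc0 : (1:ℝ) - a ≠ 0 := by linarith
      have hv2 : ‖v‖ ^ 2 = (s⁻¹) ^ 2 := by
        rw [hvdef, norm_add_sq_real, real_inner_smul_right, hqe1, norm_smul, hne,
          Real.norm_eq_abs, mul_pow, sq_abs, hq2]
        have hsne : s ≠ 0 := ne_of_gt hs0
        field_simp
        linear_combination hs2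
      have hv0 : v ≠ 0 := by
        intro h
        rw [h, norm_zero] at hv2
        have : (0:ℝ) < (s⁻¹) ^ 2 := by positivity
        rw [← hv2] at this
        simp at this
      have hvn : ‖v‖ = s⁻¹ := by
        refine sq_eq_sq_nonneg (norm_nonneg _) (by positivity) hv2
      have hsv : ‖v‖⁻¹ • v = w := by
        rw [hvn, inv_inv, hvdef, hwdef, smul_add, smul_smul]
        have : s * (1 - a)⁻¹ = s⁻¹ := by
          rw [← hs2]
          field_simp
        rw [this]
      have hqw : ⟪q, w⟫ = a * s := by
        have hsne : s ≠ 0 := ne_of_gt hs0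
        rw [hwdef, inner_add_right, real_inner_smul_right, real_inner_smul_right, he1q,
          real_inner_self_eq_norm_sq, hq2]
        field_simp
        linear_combination (-a) * hs2
      have hn20 : e1 - w ≠ 0 := by
        intro h
        have h2 : ⟪q, e1 - w⟫ = 0 := by rw [h, inner_zero_right]
        rw [inner_sub_right, he1q, hqw] at h2
        have : a * s ≠ 0 := by positivity
        rw [zero_sub, neg_eq_zero] at h2
        exact this h2
      obtain ⟨R, hRdef⟩ : ∃ x, x = (myRefl m q hq0).trans (myRefl m (e1 - w) hn20) := ⟨_, rfl⟩
      have hdet : LinearMap.det ((R.toLinearEquiv :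
          EuclideanSpace ℝ (Fin m) →ₗ[ℝ] EuclideanSpace ℝ (Fin m))) = 1 := by
        rw [hRdef, det_trans, refl_det, refl_det]
        ring
      have hRe1 : R e1 = w := by
        rw [hRdef, LinearIsometryEquiv.trans_apply]
        have h1 : myRefl m q hq0 e1 = e1 := by
          rw [refl_apply, he1q]
          simp
        rw [h1, refl_swap m e1 w hne hwn hn20]
      have hRp : R p = s⁻¹ • q := by
        rw [hRdef, LinearIsometryEquiv.trans_apply]
        have h1 : myRefl m q hq0 p = a • e1 - q := by
          rw [refl_apply, hqp]
          have hco : 2 / ‖q‖ ^ 2 * ‖q‖ ^ 2 = 2 := by field_simp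
          rw [hco, hpq]
          module
        rw [h1, refl_apply]
        have hwe1 : ⟪w, e1⟫ = s := by rw [real_inner_comm]; exact he1w
        have hwq : ⟪w, q⟫ = a * s := by rw [real_inner_comm]; exact hqw
        have h_inner : ⟪e1 - w, a • e1 - q⟫ = a := by
          rw [inner_sub_left, inner_sub_right, inner_sub_right, real_inner_smul_right,
            real_inner_smul_right, real_inner_self_eq_norm_sq, hne, hqe1, hwe1, hwq]
          ring
        have h_norm : ‖e1 - w‖ ^ 2 = 2 - 2 * s := by
          rw [norm_sub_sq_real, hne, hwn, he1w]
          ring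
        rw [h_inner, h_norm, hwdef]
        have h2s : (2:ℝ) - 2 * s ≠ 0 := by
          intro h
          have : s = 1 := by linarith
          linarith
        match_scalars
        · field_simp
          have h1s : (1:ℝ) - s ≠ 0 := sub_ne_zero.mpr (ne_of_gt hs1)
          rw [div_self h1s]
          ring
        · have haeq : a = 1 - s ^ 2 := by linarith [hs2]
          rw [haeq]
          field_simp
          have h1s : (1:ℝ) - s ≠ 0 := sub_ne_zero.mpr (ne_of_gt hs1)
          rw [show (1:ℝ) - s ^ 2 = (1 + s) * (1 - s) by ring, mul_div_assoc, div_self h1s]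
          ring
      -- conclude
      obtain ⟨A', hA'def⟩ : ∃ x : EuclideanSpace ℝ (Fin m), x = (-(1 - a)⁻¹) • q := ⟨_, rfl⟩
      have hfv : f 0 v = ‖v‖ • R p := by
        apply key v hv0 R hdet
        rw [hRe1, hsv]
      have hfv2 : f 0 v = (1 - a)⁻¹ • q := by
        rw [hfv, hRp, hvn, smul_smul]
        congr 1
        rw [← hs2]
        field_simp
      have hfA' : f A' e1 = 0 := by
        have h := htrans 0 v A'
        rw [zero_add] at h
        have hvA : v + A' = e1 := by
          rw [hvdef, hA'def]
          module
        rw [hvA] at h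
        rw [h, hfv2, hA'def]
        module
      have hle := hsp1 0 A' e1
      rw [hfA', ← hpdef] at hle
      simp only [sub_zero, norm_zero] at hle
      exact hp0 (norm_le_zero_iff.mp hle)
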